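/- For any integers d ≥ 2, ℓ ≥ 3, Δ ≥ d and any directed graph G' whose underlying undirected graph has maximum degree at most Δ and in which every vertex has out-degree at most d, there exists a mapping γ : P̂_ℓ(G') → V(G') such that (i) γ(Π) is a vertex of Π for each Π ∈ P̂_ℓ(G'), and (ii) |γ^{−1}(v)| ≤ 2^{ℓ}·d^{⌈ℓ/2⌉+1}·Δ^{⌊ℓ/2⌋−1} for each vertex v ∈ V(G'). -/

import Mathlib

/-- A walk of `G` bundled with its two endpoints. -/
abbrev WalkSig {V : Type*} (G : SimpleGraph V) : Type _ := Σ v w : V, G.Walk v w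

/-- Reversal of a bundled walk. -/
def WalkSig.rev {V : Type*} {G : SimpleGraph V} (q : WalkSig G) : WalkSig G :=
  ⟨q.2.1, q.1, q.2.2.reverse⟩

lemma WalkSig.rev_rev {V : Type*} {G : SimpleGraph V} (q : WalkSig G) : q.rev.rev = q := by
  rcases q with ⟨v, w, p⟩
  simp [WalkSig.rev]

/-- Identify a walk with its reversal: an equivalence class is an "undirected" walk. -/
def walkSetoid {V : Type*} (G : SimpleGraph V) : Setoid (WalkSig G) where
  r q q' := q' = q ∨ q' = q.rev
  iseqv := by
    refine ⟨fun q => Or.inl rfl, ?_, ?_⟩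
    · rintro q q' (rfl | rfl)
      · exact Or.inl rfl
      · exact Or.inr (WalkSig.rev_rev q).symm
    · rintro q q' q'' (rfl | rfl) h
      · exact h
      · rcases h with rfl | rfl
        · exact Or.inr rfl
        · exact Or.inl (WalkSig.rev_rev q)

/-- Undirected walks of `G`. -/
def UWalk {V : Type*} (G : SimpleGraph V) : Type _ := Quotient (walkSetoid G)

/-- `q` is a path of length at least 1 and at most `ℓ`. -/
def IsPathLE {V : Type*} (G : SimpleGraph V) (ℓ : ℕ) (q : WalkSig G) : Prop :=
  q.2.2.IsPath ∧ 1 ≤ q.2.2.length ∧ q.2.2.length ≤ ℓ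

/-- `P_ℓ(G)`: the set of undirected paths of `G` of length at least 1 and at most `ℓ`. -/
def PathsLE {V : Type*} (G : SimpleGraph V) (ℓ : ℕ) : Set (UWalk G) :=
  {P | ∃ q : WalkSig G, Quotient.mk (walkSetoid G) q = P ∧ IsPathLE G ℓ q}

/-- For a directed graph given by the edge relation `A` (with underlying undirected graph
`SimpleGraph.fromRel A`), a bundled walk `q` is in `P̂_ℓ` when it is a path of length
1 ≤ r ≤ ℓ whose first edge can be directed towards its first endpoint
(`A x₁ x₀`) and whose last edge can be directed towards its last endpoint
(`A x_{r-1} x_r`). -/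
def PhatCond {V : Type*} (A : V → V → Prop) (ℓ : ℕ)
    (q : WalkSig (SimpleGraph.fromRel A)) : Prop :=
  IsPathLE (SimpleGraph.fromRel A) ℓ q ∧
    A (q.2.2.getVert 1) q.1 ∧ A (q.2.2.getVert (q.2.2.length - 1)) q.2.1

/-- The set `P̂_ℓ(G')` of undirected paths, as equivalence classes. -/
def PhatPaths {V : Type*} (A : V → V → Prop) (ℓ : ℕ) :
    Set (UWalk (SimpleGraph.fromRel A)) :=
  {P | ∃ q, Quotient.mk (walkSetoid (SimpleGraph.fromRel A)) q = P ∧ PhatCond A ℓ q}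

/-! ### Auxiliary machinery -/

section ChainMachinery
variable {V : Type*} [DecidableEq V]

/-- Finset of lists of length `n` starting (conceptually) at `v`, where the `t`-th entry must
lie in `step t` of the previous entry. -/
noncomputable def chainF : (ℕ → V → Finset V) → V → ℕ → Finset (List V)
  | _, _, 0 => {[]}
  | step, v, n+1 => (step 0 v).biUnion fun w =>
      (chainF (fun i => step (i+1)) w n).image (w :: ·)

lemma chainF_card : ∀ (n : ℕ) (c : ℕ → ℕ) (step : ℕ → V → Finset V),
    (∀ t x, (step t x).card ≤ c t) → ∀ v,
      (chainF step v n).card ≤ ∏ t ∈ Finset.range n, c t := by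
  intro n
  induction n with
  | zero => intro c step h v; simp [chainF]
  | succ n ih =>
    intro c step h v
    calc (chainF step v (n+1)).card
        ≤ ∑ w ∈ step 0 v, ((chainF (fun i => step (i+1)) w n).image (w :: ·)).card :=
          Finset.card_biUnion_le
      _ ≤ ∑ w ∈ step 0 v, (∏ t ∈ Finset.range n, c (t+1)) := by
          refine Finset.sum_le_sum fun w _ => ?_
          exact (Finset.card_image_le).trans (ih _ _ (fun t x => h (t+1) x) w)
      _ = (step 0 v).card * ∏ t ∈ Finset.range n, c (t+1) := by
          rw [Finset.sum_const, smul_eq_mul]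
      _ ≤ c 0 * ∏ t ∈ Finset.range n, c (t+1) :=
          Nat.mul_le_mul_right _ (h 0 v)
      _ = ∏ t ∈ Finset.range (n+1), c t := by
          rw [Finset.prod_range_succ']; ring

omit [DecidableEq V] in
private lemma getD_irrel (l : List V) (i : ℕ) (h : i < l.length) (d d' : V) :
    l.getD i d = l.getD i d' := by
  simp [List.getD_eq_getElem?_getD, List.getElem?_eq_getElem h]

lemma mem_chainF : ∀ (n : ℕ) (step : ℕ → V → Finset V) (v : V) (l : List V),
    l.length = n →
    (∀ t, t < n → (v :: l).getD (t+1) v ∈ step t ((v :: l).getD t v)) →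
    l ∈ chainF step v n := by
  intro n
  induction n with
  | zero => intro step v l hl _; simp [chainF, List.length_eq_zero_iff.1 hl]
  | succ n ih =>
    intro step v l hl hstep
    match l with
    | w :: l' =>
      have hw : w ∈ step 0 v := by simpa using hstep 0 (Nat.succ_pos _)
      have hl' : l'.length = n := by simpa using hl
      have hmem : l' ∈ chainF (fun i => step (i+1)) w n := by
        refine ih _ w l' hl' fun t ht => ?_
        have := hstep (t+1) (by omega)
        have e1 : (v :: w :: l').getD (t+1+1) v = (w :: l').getD (t+1) w := by
          rw [List.getD_cons_succ]
          exact getD_irrel _ _ (by simp only [List.length_cons]; omega) _ _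
        have e2 : (v :: w :: l').getD (t+1) v = (w :: l').getD t w := by
          rw [List.getD_cons_succ]
          exact getD_irrel _ _ (by simp only [List.length_cons]; omega) _ _
        rwa [e1, e2] at this
      simp only [chainF, Finset.mem_biUnion]
      exact ⟨w, hw, Finset.mem_image_of_mem _ hmem⟩

/-- All boolean lists of length `n`. -/
noncomputable def allB : ℕ → Finset (List Bool)
  | 0 => {[]}
  | n+1 => ({true, false} : Finset Bool).biUnion fun b => (allB n).image (b :: ·)

lemma card_allB : ∀ n, (allB n).card ≤ 2 ^ n := by
  intro n
  induction n with
  | zero => simp [allB]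
  | succ n ih =>
    calc (allB (n+1)).card ≤ ∑ b ∈ ({true, false} : Finset Bool), ((allB n).image (b :: ·)).card :=
        Finset.card_biUnion_le
      _ ≤ ∑ _b ∈ ({true, false} : Finset Bool), 2 ^ n := by
          exact Finset.sum_le_sum fun b _ => (Finset.card_image_le).trans ih
      _ = 2 * 2 ^ n := by simp
      _ = 2 ^ (n+1) := by ring

lemma mem_allB : ∀ (n : ℕ) (l : List Bool), l.length = n → l ∈ allB n := by
  intro n
  induction n with
  | zero => intro l hl; simp [allB, List.length_eq_zero_iff.1 hl]
  | succ n ih =>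
    intro l hl
    match l with
    | b :: l' =>
      simp only [allB, Finset.mem_biUnion]
      refine ⟨b, by cases b <;> simp, Finset.mem_image_of_mem _ (ih l' (by simpa using hl))⟩

lemma length_of_mem_allB : ∀ (n : ℕ) (l : List Bool), l ∈ allB n → l.length = n := by
  intro n
  induction n with
  | zero => intro l hl; simp only [allB, Finset.mem_singleton] at hl; simp [hl]
  | succ n ih =>
    intro l hl
    simp only [allB, Finset.mem_biUnion, Finset.mem_image] at hl
    obtain ⟨b, -, l', hl', rfl⟩ := hl
    simp [ih l' hl']

end ChainMachinery

section Patterns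

/-- indicator of the `i`-th entry being `true` -/
def eT (s : List Bool) (i : ℕ) : ℕ := if s.getD i false = true then 1 else 0
def eF (s : List Bool) (i : ℕ) : ℕ := if s.getD i false = true then 0 else 1

/-- the number of "d-steps" of a pattern split at position `j`. -/
def fcnt (s : List Bool) (j : ℕ) : ℕ :=
  (∑ i ∈ Finset.range j, eT s i) + ∑ t ∈ Finset.range (s.length - j), eF s (j + t)

/-- the number of "Δ-steps". -/
def gcnt (s : List Bool) (j : ℕ) : ℕ :=
  (∑ i ∈ Finset.range j, eF s i) + ∑ t ∈ Finset.range (s.length - j), eT s (j + t)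

lemma eT_add_eF (s : List Bool) (i : ℕ) : eT s i + eF s i = 1 := by
  unfold eT eF; split_ifs <;> rfl

lemma fcnt_add_gcnt (s : List Bool) (j : ℕ) (hj : j ≤ s.length) :
    fcnt s j + gcnt s j = s.length := by
  unfold fcnt gcnt
  have h1 : (∑ i ∈ Finset.range j, eT s i) + (∑ i ∈ Finset.range j, eF s i) = j := by
    rw [← Finset.sum_add_distrib]
    simp [eT_add_eF]
  have h2 : (∑ t ∈ Finset.range (s.length - j), eF s (j+t))
      + (∑ t ∈ Finset.range (s.length - j), eT s (j+t)) = s.length - j := by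
    rw [← Finset.sum_add_distrib]
    have : ∀ t, eF s (j+t) + eT s (j+t) = 1 := fun t => by
      rw [Nat.add_comm]; exact eT_add_eF s (j+t)
    simp [this]
  omega

/-- The canonical split position for a pattern. -/
def Jfun (s : List Bool) : ℕ :=
  if min s.length ((s.length + 1) / 2 + 1) ≤ fcnt s 1 then 1 else s.length - 1

lemma Jfun_le (s : List Bool) (h : 1 ≤ s.length) : Jfun s ≤ s.length := by
  unfold Jfun; split_ifs <;> omega

lemma sum_shift (f : ℕ → ℕ) (n : ℕ) (h : 1 ≤ n) :
    ∑ i ∈ Finset.range n, f i = f 0 + ∑ t ∈ Finset.range (n-1), f (t+1) := by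
  obtain ⟨m, rfl⟩ : ∃ m, n = m + 1 := ⟨n-1, by omega⟩
  rw [Finset.sum_range_succ' f m]
  simp [Nat.add_comm]

lemma sum_top (f : ℕ → ℕ) (n : ℕ) (h : 1 ≤ n) :
    ∑ i ∈ Finset.range n, f i = (∑ i ∈ Finset.range (n-1), f i) + f (n-1) := by
  obtain ⟨m, rfl⟩ : ∃ m, n = m + 1 := ⟨n-1, by omega⟩
  rw [Finset.sum_range_succ f m]
  simp

lemma eT_eq_one {s : List Bool} {i : ℕ} (h : s.getD i false = true) : eT s i = 1 := by
  unfold eT; rw [if_pos h]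

lemma eT_eq_zero {s : List Bool} {i : ℕ} (h : s.getD i false = false) : eT s i = 0 := by
  unfold eT; rw [h]; simp

lemma eF_eq_zero {s : List Bool} {i : ℕ} (h : s.getD i false = true) : eF s i = 0 := by
  unfold eF; rw [if_pos h]

lemma eF_eq_one {s : List Bool} {i : ℕ} (h : s.getD i false = false) : eF s i = 1 := by
  unfold eF; rw [h]; simp

lemma Jfun_spec (s : List Bool) (h1 : 1 ≤ s.length)
    (hhead : s.getD 0 false = true)
    (hlast : 2 ≤ s.length → s.getD (s.length - 1) false = false) :
    min s.length ((s.length + 1) / 2 + 1) ≤ fcnt s (Jfun s) := by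
  have hT0 : eT s 0 = 1 := eT_eq_one hhead
  have hF0 : eF s 0 = 0 := eF_eq_zero hhead
  have hTF : (∑ i ∈ Finset.range s.length, eT s i) + (∑ i ∈ Finset.range s.length, eF s i)
      = s.length := by
    rw [← Finset.sum_add_distrib]; simp [eT_add_eF]
  have hf1 : fcnt s 1 = 1 + ∑ i ∈ Finset.range s.length, eF s i := by
    unfold fcnt
    rw [Finset.sum_range_one, hT0]
    rw [sum_shift (fun i => eF s i) s.length h1, hF0]
    have : ∀ t ∈ Finset.range (s.length - 1), eF s (1 + t) = eF s (t + 1) := by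
      intro t _; rw [Nat.add_comm]
    rw [Finset.sum_congr rfl this]
    omega
  unfold Jfun
  split_ifs with hc
  · exact hc
  · have hr2 : 2 ≤ s.length := by
      by_contra hcon
      have hco : s.length = 1 := by omega
      apply hc
      rw [hf1]
      omega
    have hlT : eT s (s.length - 1) = 0 := eT_eq_zero (hlast hr2)
    have hlF : eF s (s.length - 1) = 1 := eF_eq_one (hlast hr2)
    have hfr : fcnt s (s.length - 1)
        = (∑ i ∈ Finset.range s.length, eT s i) + 1 := by
      unfold fcnt
      rw [sum_top (fun i => eT s i) s.length h1] at *
      have e2 : ∑ t ∈ Finset.range (s.length - (s.length - 1)), eF s (s.length - 1 + t) = 1 := by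
        have : s.length - (s.length - 1) = 1 := by omega
        rw [this, Finset.sum_range_one, Nat.add_zero, hlF]
      rw [e2]
      omega
    rw [hfr]
    rw [hf1] at hc
    omega

/-- product of step bounds equals `d^fcnt * Δ^gcnt`. -/
lemma prod_split (s : List Bool) (j : ℕ) (d Δ : ℕ) :
    (∏ t ∈ Finset.range j, if s.getD (j - 1 - t) false = true then d else Δ) *
      (∏ t ∈ Finset.range (s.length - j), if s.getD (j + t) false = true then Δ else d)
    = d ^ fcnt s j * Δ ^ gcnt s j := by
  have hL : (∏ t ∈ Finset.range j, if s.getD (j - 1 - t) false = true then d else Δ)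
      = (∏ i ∈ Finset.range j, if s.getD i false = true then d else Δ) :=
    Finset.prod_range_reflect (fun i => if s.getD i false = true then d else Δ) j
  have key : ∀ (n : ℕ) (b : ℕ → Bool) (x y : ℕ),
      (∏ i ∈ Finset.range n, if b i then x else y)
      = x ^ (∑ i ∈ Finset.range n, if b i then 1 else 0)
        * y ^ (∑ i ∈ Finset.range n, if b i then 0 else 1) := by
    intro n b x y
    rw [← Finset.prod_pow_eq_pow_sum, ← Finset.prod_pow_eq_pow_sum, ← Finset.prod_mul_distrib]
    refine Finset.prod_congr rfl fun i _ => ?_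
    by_cases h : b i <;> simp [h]
  rw [hL, key j (fun i => s.getD i false) d Δ,
    key (s.length - j) (fun t => s.getD (j+t) false) Δ d]
  unfold fcnt gcnt eT eF
  rw [pow_add, pow_add]
  ring

/-- monotone comparison: spending more d's helps. -/
lemma pow_swap_le {d Δ : ℕ} (hd : 1 ≤ d) (hdΔ : d ≤ Δ) {f g m : ℕ} (hm : m ≤ f) :
    d ^ f * Δ ^ g ≤ d ^ m * Δ ^ (f + g - m) := by
  have h1 : d ^ f = d ^ m * d ^ (f - m) := by rw [← pow_add]; congr 1; omega
  have h2 : f + g - m = (f - m) + g := by omega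
  rw [h1, h2, pow_add, Nat.mul_assoc]
  exact Nat.mul_le_mul_left _ (Nat.mul_le_mul_right _ (Nat.pow_le_pow_left hdΔ _))

/-- The final numeric estimate. -/
lemma numeric_bound {d Δ : ℕ} (hd : 1 ≤ d) (hdΔ : d ≤ Δ) :
    ∀ L, 1 ≤ L →
      (∑ r ∈ Finset.Icc 1 L, 2 ^ (r-1) *
        (d ^ (min r ((r+1)/2+1)) * Δ ^ (r - min r ((r+1)/2+1))))
      ≤ 2 ^ L * d ^ ((L+1)/2 + 1) * Δ ^ (L/2 - 1) := by
  have hΔ1 : 1 ≤ Δ := le_trans hd hdΔ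
  intro L
  induction L with
  | zero => omega
  | succ L ih =>
    intro _
    by_cases hL : L = 0
    · subst hL
      norm_num
      nlinarith [hd, hΔ1]
    · have hL1 : 1 ≤ L := by omega
      rw [Finset.sum_Icc_succ_top (by omega : 1 ≤ L + 1)]
      have hexp : (L+1) - ((L+2)/2+1) = (L+1)/2 - 1 := by omega
      have hmono : 2 ^ L * d ^ ((L+1)/2 + 1) * Δ ^ (L/2 - 1)
          ≤ 2 ^ L * (d ^ ((L+2)/2 + 1) * Δ ^ ((L+1)/2 - 1)) := by
        rw [Nat.mul_assoc]
        refine Nat.mul_le_mul_left _ (Nat.mul_le_mul ?_ ?_)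
        · exact Nat.pow_le_pow_right hd (by omega)
        · exact Nat.pow_le_pow_right hΔ1 (by omega)
      calc (∑ r ∈ Finset.Icc 1 L, 2 ^ (r-1) *
            (d ^ (min r ((r+1)/2+1)) * Δ ^ (r - min r ((r+1)/2+1))))
            + 2 ^ (L+1-1) * (d ^ (min (L+1) ((L+1+1)/2+1)) * Δ ^ ((L+1) - min (L+1) ((L+1+1)/2+1)))
          ≤ 2 ^ L * d ^ ((L+1)/2 + 1) * Δ ^ (L/2 - 1)
            + 2 ^ L * (d ^ ((L+2)/2+1) * Δ ^ ((L+1)/2 - 1)) := by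
            have := ih hL1
            have heq : (L+1-1) = L := by omega
            rw [heq]
            have : min (L+1) ((L+1+1)/2+1) = (L+2)/2+1 := by omega
            rw [this]
            rw [hexp]
            omega
        _ ≤ 2 ^ L * (d ^ ((L+2)/2+1) * Δ ^ ((L+1)/2 - 1))
            + 2 ^ L * (d ^ ((L+2)/2+1) * Δ ^ ((L+1)/2 - 1)) := by
            exact Nat.add_le_add_right hmono _
        _ = 2 ^ (L+1) * d ^ ((L+1+1)/2+1) * Δ ^ ((L+1)/2 - 1) := by ring

end Patterns

section WalkLemmas
variable {V : Type*} {G : SimpleGraph V}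

lemma support_eq_map {a b : V} (p : G.Walk a b) :
    p.support = (List.range (p.length + 1)).map p.getVert := by
  induction p with
  | nil => rfl
  | @cons u x w h p ih =>
    rw [SimpleGraph.Walk.support_cons, ih, SimpleGraph.Walk.length_cons,
      List.range_succ_eq_map (n := p.length + 1), List.map_cons, List.map_map]
    congr 1

lemma walksig_eq_of_support_eq {a b a' b' : V} (p : G.Walk a b) (p' : G.Walk a' b')
    (h : p.support = p'.support) : (⟨a, b, p⟩ : WalkSig G) = ⟨a', b', p'⟩ := by
  induction p generalizing a' b' p' with
  | nil =>
    cases p' with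
    | nil =>
      simp only [SimpleGraph.Walk.support_nil, List.cons.injEq] at h
      obtain ⟨rfl, -⟩ := h
      rfl
    | cons h' q =>
      exfalso
      simp only [SimpleGraph.Walk.support_nil, SimpleGraph.Walk.support_cons,
        List.cons.injEq] at h
      exact SimpleGraph.Walk.support_ne_nil q h.2.symm
  | @cons u x w hadj p ih =>
    cases p' with
    | nil =>
      exfalso
      simp only [SimpleGraph.Walk.support_nil, SimpleGraph.Walk.support_cons,
        List.cons.injEq] at h
      exact SimpleGraph.Walk.support_ne_nil p h.2
    | @cons u' x' w' hadj' q =>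
      simp only [SimpleGraph.Walk.support_cons, List.cons.injEq] at h
      obtain ⟨rfl, h2⟩ := h
      have hsig := ih q h2
      obtain ⟨rfl, h3⟩ := Sigma.mk.inj_iff.mp hsig
      obtain ⟨rfl, h4⟩ := Sigma.mk.inj_iff.mp (eq_of_heq h3)
      have hq : p = q := eq_of_heq h4
      subst hq
      rfl

lemma getVert_mem_support' {a b : V} (p : G.Walk a b) (i : ℕ) :
    p.getVert i ∈ p.support := by
  rw [SimpleGraph.Walk.mem_support_iff_exists_getVert]
  by_cases h : i ≤ p.length
  · exact ⟨i, rfl, h⟩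
  · exact ⟨p.length, by rw [SimpleGraph.Walk.getVert_length,
      SimpleGraph.Walk.getVert_of_length_le _ (by omega)], le_rfl⟩

end WalkLemmas

section ListHelpers

lemma reverse_map_range {α : Type*} (n : ℕ) (f : ℕ → α) :
    ((List.range n).map f).reverse = (List.range n).map (fun i => f (n - 1 - i)) := by
  apply List.ext_getElem (by simp)
  intro i h1 h2
  simp only [List.length_reverse, List.length_map, List.length_range] at h1 h2
  simp only [List.getElem_reverse, List.getElem_map, List.getElem_range,
    List.length_map, List.length_range]

lemma map_range_split {α : Type*} (r j : ℕ) (hj : j ≤ r) (g : ℕ → α) :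
    (List.range (r+1)).map g
      = (List.range j).map g ++ g j :: (List.range (r - j)).map (fun t => g (j + 1 + t)) := by
  have h1 : r + 1 = j + (r - j + 1) := by omega
  rw [h1, List.range_add, List.map_append]
  congr 1
  rw [List.map_map, List.range_succ_eq_map, List.map_cons, List.map_map]
  congr 1
  apply List.map_congr_left
  intro t ht
  simp only [Function.comp_apply]
  congr 1
  omega

lemma getD_map_range {α : Type*} {n t : ℕ} (h : t < n) (f : ℕ → α) (d : α) :
    ((List.range n).map f).getD t d = f t := by
  rw [List.getD_eq_getElem _ _ (by simpa using h)]
  simp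

end ListHelpers

section SigPat

variable {V : Type*} (A : V → V → Prop)

open Classical in
/-- The canonical orientation pattern of a bundled walk: entry `i` (0-based, for the edge
from `x_i` to `x_{i+1}`) is `true` when, travelling towards `x_0`, it is a "d-step". -/
noncomputable def sigPat (q : WalkSig (SimpleGraph.fromRel A)) : List Bool :=
  (List.range q.2.2.length).map fun i =>
    if i = 0 ∨ (i + 1 ≠ q.2.2.length ∧ A (q.2.2.getVert (i+1)) (q.2.2.getVert i)) then true
    else false

lemma sigPat_length (q : WalkSig (SimpleGraph.fromRel A)) :
    (sigPat A q).length = q.2.2.length := by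
  simp [sigPat]

open Classical in
lemma sigPat_getD {q : WalkSig (SimpleGraph.fromRel A)} {i : ℕ} (h : i < q.2.2.length) :
    (sigPat A q).getD i false
      = if i = 0 ∨ (i + 1 ≠ q.2.2.length ∧ A (q.2.2.getVert (i+1)) (q.2.2.getVert i)) then true
        else false := by
  unfold sigPat
  exact getD_map_range h _ _

lemma sigPat_getD_true_iff {q : WalkSig (SimpleGraph.fromRel A)} {i : ℕ}
    (h : i < q.2.2.length) :
    (sigPat A q).getD i false = true
      ↔ (i = 0 ∨ (i + 1 ≠ q.2.2.length ∧ A (q.2.2.getVert (i+1)) (q.2.2.getVert i))) := by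
  rw [sigPat_getD A h]
  by_cases hc : i = 0 ∨ (i + 1 ≠ q.2.2.length ∧ A (q.2.2.getVert (i+1)) (q.2.2.getVert i)) <;>
    simp [hc]

/-- the value of `γ` on the canonical representative. -/
noncomputable def gamFun (P : UWalk (SimpleGraph.fromRel A)) : V :=
  (Quotient.out (s := walkSetoid (SimpleGraph.fromRel A)) P).2.2.getVert
    (Jfun (sigPat A (Quotient.out P)))

lemma phatCond_rev {ℓ : ℕ} {q : WalkSig (SimpleGraph.fromRel A)} (h : PhatCond A ℓ q) :
    PhatCond A ℓ q.rev := by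
  obtain ⟨⟨hp, h1, h2⟩, hA1, hA2⟩ := h
  rcases q with ⟨a, b, p⟩
  refine ⟨⟨hp.reverse, ?_, ?_⟩, ?_, ?_⟩
  · simpa [WalkSig.rev] using h1
  · simpa [WalkSig.rev] using h2
  · show A (p.reverse.getVert 1) b
    rw [SimpleGraph.Walk.getVert_reverse]
    exact hA2
  · show A (p.reverse.getVert (p.reverse.length - 1)) a
    rw [SimpleGraph.Walk.getVert_reverse, SimpleGraph.Walk.length_reverse]
    have : p.length - (p.length - 1) = 1 := by
      simp only [SimpleGraph.Walk.length_nil] at h1 ⊢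
      omega
    rw [this]
    exact hA1

end SigPat

/-- For d ≥ 2, ℓ ≥ 3, Δ ≥ d and a directed graph G' (edge relation `A`) whose underlying
undirected graph has maximum degree at most Δ and whose out-degrees are at most d, there is
a map γ : P̂_ℓ(G') → V(G') with γ(Π) a vertex of Π, such that each vertex is the image of at
most 2^ℓ·d^(⌈ℓ/2⌉+1)·Δ^(⌊ℓ/2⌋−1) paths of P̂_ℓ(G'). -/
theorem stmt9 {V : Type*} (A : V → V → Prop) (d ℓ Δ : ℕ)
    (hd : 2 ≤ d) (hℓ : 3 ≤ ℓ) (hΔ : d ≤ Δ)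
    (hirr : ∀ v, ¬ A v v)
    (hmax : ∀ v, ((SimpleGraph.fromRel A).neighborSet v).Finite ∧
        ((SimpleGraph.fromRel A).neighborSet v).ncard ≤ Δ)
    (hout : ∀ v, {w | A v w}.Finite ∧ {w | A v w}.ncard ≤ d) :
    ∃ γ : UWalk (SimpleGraph.fromRel A) → V,
      (∀ q : WalkSig (SimpleGraph.fromRel A), PhatCond A ℓ q →
          γ (Quotient.mk (walkSetoid (SimpleGraph.fromRel A)) q) ∈ q.2.2.support) ∧
      ∀ v : V,
        {P ∈ PhatPaths A ℓ | γ P = v}.Finite ∧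
        {P ∈ PhatPaths A ℓ | γ P = v}.ncard ≤
          2 ^ ℓ * d ^ ((ℓ + 1) / 2 + 1) * Δ ^ (ℓ / 2 - 1) := by
  classical
  set G := SimpleGraph.fromRel A with hG
  -- the out- and neighbour- finsets
  set outF : V → Finset V := fun x => (hout x).1.toFinset with houtF
  set nbrF : V → Finset V := fun x => (hmax x).1.toFinset with hnbrF
  have outF_card : ∀ x, (outF x).card ≤ d := fun x => by
    rw [houtF]
    rw [← Set.ncard_eq_toFinset_card _ (hout x).1]
    exact (hout x).2
  have nbrF_card : ∀ x, (nbrF x).card ≤ Δ := fun x => by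
    rw [hnbrF]
    rw [← Set.ncard_eq_toFinset_card _ (hmax x).1]
    exact (hmax x).2
  have mem_outF : ∀ x w, w ∈ outF x ↔ A x w := fun x w => by
    rw [houtF]; exact Set.Finite.mem_toFinset _
  have mem_nbrF : ∀ x w, w ∈ nbrF x ↔ G.Adj x w := fun x w => by
    rw [hnbrF]; exact Set.Finite.mem_toFinset _
  -- out of a class, get the canonical representative's PhatCond
  have out_cond : ∀ P ∈ PhatPaths A ℓ,
      PhatCond A ℓ (Quotient.out (s := walkSetoid G) P) := by
    rintro P ⟨q0, hq0, hc0⟩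
    have h1 : Quotient.mk (walkSetoid G) (Quotient.out (s := walkSetoid G) P)
        = Quotient.mk (walkSetoid G) q0 := by
      exact (Quotient.out_eq (s := walkSetoid G) P).trans hq0.symm
    have h2 := Quotient.exact h1
    rcases h2 with h2 | h2
    · rw [h2] at hc0; exact hc0
    · have : Quotient.out (s := walkSetoid G) P = q0.rev := by
        rw [h2, WalkSig.rev_rev]
      rw [this]
      exact phatCond_rev A hc0
  refine ⟨gamFun A, ?_, ?_⟩
  · -- (i) γ(Π) is a vertex of Π
    intro q _
    have h1 : Quotient.mk (walkSetoid G) (Quotient.out (s := walkSetoid G)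
        (Quotient.mk (walkSetoid G) q)) = Quotient.mk (walkSetoid G) q := Quotient.out_eq _
    have h2 := Quotient.exact h1
    rcases h2 with h2 | h2
    · unfold gamFun
      rw [← h2]
      exact getVert_mem_support' _ _
    · have h3 : q.rev = Quotient.out (s := walkSetoid G) (Quotient.mk (walkSetoid G) q) :=
        (congrArg WalkSig.rev h2).trans (WalkSig.rev_rev _)
      unfold gamFun
      rw [← h3]
      rcases q with ⟨a, b, p⟩
      show p.reverse.getVert _ ∈ p.support
      have := getVert_mem_support' p.reverse
        (Jfun (sigPat A (WalkSig.rev ⟨a, b, p⟩)))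
      rwa [SimpleGraph.Walk.support_reverse, List.mem_reverse] at this
  · intro v
    -- step functions for the two halves, for a given pattern
    set stepL : List Bool → ℕ → V → Finset V := fun s t x =>
      if s.getD (Jfun s - 1 - t) false = true then outF x else nbrF x with hstepL
    set stepR : List Bool → ℕ → V → Finset V := fun s t x =>
      if s.getD (Jfun s + t) false = true then nbrF x else outF x with hstepR
    set pat : ℕ → Finset (List Bool) := fun r =>
      ((allB (r-1)).image (true :: ·)).filter
        (fun s => min r ((r+1)/2+1) ≤ fcnt s (Jfun s)) with hpat
    set T : Finset (List V) := (Finset.Icc 1 ℓ).biUnion (fun r => (pat r).biUnion fun s =>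
      ((chainF (stepL s) v (Jfun s)) ×ˢ (chainF (stepR s) v (s.length - Jfun s))).image
        (fun LR => LR.1.reverse ++ v :: LR.2)) with hT
    set S := {P ∈ PhatPaths A ℓ | gamFun A P = v} with hS
    -- main membership claim
    have key : ∀ q : WalkSig G, PhatCond A ℓ q →
        q.2.2.getVert (Jfun (sigPat A q)) = v → q.2.2.support ∈ T := by
      rintro ⟨a, b, p⟩ hcond hv
      obtain ⟨⟨hpath, hr1, hrℓ⟩, hA1, hA2⟩ := hcond
      replace hr1 : 1 ≤ p.length := hr1
      replace hrℓ : p.length ≤ ℓ := hrℓ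
      replace hA1 : A (p.getVert 1) a := hA1
      replace hA2 : A (p.getVert (p.length - 1)) b := hA2
      set s := sigPat A (⟨a, b, p⟩ : WalkSig G) with hsdef
      have hslen : s.length = p.length := sigPat_length A _
      have hhead : s.getD 0 false = true := by
        rw [hsdef, sigPat_getD_true_iff A (show 0 < p.length by omega)]
        exact Or.inl rfl
      have hlastF : 2 ≤ p.length → s.getD (p.length - 1) false = false := by
        intro hr2
        rw [hsdef, sigPat_getD A (show p.length - 1 < p.length by omega)]
        have hcondn : ¬((p.length - 1 = 0) ∨ (p.length - 1 + 1 ≠ p.length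
            ∧ A (p.getVert (p.length - 1 + 1)) (p.getVert (p.length - 1)))) := by
          push_neg
          exact ⟨by omega, fun hne => absurd (show p.length - 1 + 1 = p.length by omega) hne⟩
        rw [if_neg hcondn]
      set j := Jfun s with hjdef
      have hjr : j ≤ p.length := by rw [hjdef, ← hslen]; exact Jfun_le s (by omega)
      have hfs : min p.length ((p.length+1)/2+1) ≤ fcnt s j := by
        have := Jfun_spec s (by omega) hhead (by rw [hslen]; exact hlastF)
        rwa [hslen] at this
      have hgj : p.getVert j = v := hv
      -- the getD-true facts give A-edges towards x_0 ; getD-false give A-edges towards x_r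
      have hstepTrue : ∀ i, i < p.length → s.getD i false = true →
          A (p.getVert (i+1)) (p.getVert i) := by
        intro i hi hb
        rw [hsdef, sigPat_getD_true_iff A (show i < p.length from hi)] at hb
        rcases hb with rfl | ⟨-, hb⟩
        · have hg0 : p.getVert 0 = a := SimpleGraph.Walk.getVert_zero p
          rw [hg0]
          exact hA1
        · exact hb
      have hstepFalse : ∀ i, i < p.length → s.getD i false = false →
          A (p.getVert i) (p.getVert (i+1)) := by
        intro i hi hb
        have hbn : ¬ ((sigPat A (⟨a, b, p⟩ : WalkSig G)).getD i false = true) := by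
          rw [← hsdef, hb]; simp
        have hnot := (sigPat_getD_true_iff A (show i < p.length from hi)).not.mp hbn
        push_neg at hnot
        obtain ⟨hi0, hnot2⟩ := hnot
        by_cases hir : i + 1 = p.length
        · have hb' : p.getVert (i+1) = b := by
            rw [hir]
            exact SimpleGraph.Walk.getVert_length p
          have hieq : i = p.length - 1 := by omega
          rw [hb', hieq]
          exact hA2
        · have hadj : (SimpleGraph.fromRel A).Adj (p.getVert i) (p.getVert (i+1)) :=
            SimpleGraph.Walk.adj_getVert_succ p (by omega)
          rcases ((SimpleGraph.fromRel_adj _ _ _).mp hadj).2 with h | h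
          · exact h
          · exact absurd h (hnot2 hir)
      -- the two halves
      set L : List V := (List.range j).map (fun t => p.getVert (j - 1 - t)) with hLdef
      set R : List V := (List.range (p.length - j)).map (fun t => p.getVert (j + 1 + t))
        with hRdef
      have hgetL : ∀ t, t ≤ j → (v :: L).getD t v = p.getVert (j - t) := by
        intro t ht
        match t with
        | 0 => simpa using hgj.symm
        | (t'+1) =>
          rw [List.getD_cons_succ, hLdef, getD_map_range (show t' < j by omega)]
          congr 1
          omega
      have hgetR : ∀ t, t ≤ p.length - j → (v :: R).getD t v = p.getVert (j + t) := by
        intro t ht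
        match t with
        | 0 => simpa using hgj.symm
        | (t'+1) =>
          rw [List.getD_cons_succ, hRdef, getD_map_range (show t' < p.length - j by omega)]
          congr 1
          omega
      have hL : L ∈ chainF (stepL s) v j := by
        apply mem_chainF j (stepL s) v L (by simp [hLdef])
        intro t ht
        rw [hgetL (t+1) (by omega), hgetL t (by omega)]
        rw [hstepL]
        simp only
        rw [← hjdef]
        by_cases hb : s.getD (j - 1 - t) false = true
        · rw [if_pos hb, mem_outF]
          have := hstepTrue (j - 1 - t) (by omega) hb
          have e1 : j - 1 - t + 1 = j - t := by omega
          have e2 : j - 1 - t = j - (t+1) := by omega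
          rw [e1, e2] at this
          exact this
        · rw [if_neg hb, mem_nbrF]
          have hadj : G.Adj (p.getVert (j - (t+1))) (p.getVert (j - t)) := by
            have := SimpleGraph.Walk.adj_getVert_succ p
              (show j - (t+1) < p.length by omega)
            have e1 : j - (t+1) + 1 = j - t := by omega
            rwa [e1] at this
          exact hadj.symm
      have hR : R ∈ chainF (stepR s) v (p.length - j) := by
        apply mem_chainF (p.length - j) (stepR s) v R (by simp [hRdef])
        intro t ht
        rw [hgetR (t+1) (by omega), hgetR t (by omega)]
        rw [hstepR]
        simp only
        rw [← hjdef]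
        by_cases hb : s.getD (j + t) false = true
        · rw [if_pos hb, mem_nbrF]
          have hadj : G.Adj (p.getVert (j + t)) (p.getVert (j + (t+1))) := by
            have := SimpleGraph.Walk.adj_getVert_succ p (show j + t < p.length by omega)
            have e1 : j + t + 1 = j + (t+1) := by omega
            rwa [e1] at this
          exact hadj
        · rw [if_neg hb, mem_outF]
          have hb' : s.getD (j + t) false = false := by
            cases hx : s.getD (j + t) false
            · rfl
            · exact absurd hx hb
          have := hstepFalse (j + t) (by omega) hb'
          have e1 : j + t + 1 = j + (t+1) := by omega
          rwa [e1] at this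
      -- pattern membership
      have hspat : s ∈ pat p.length := by
        rw [hpat]
        simp only [Finset.mem_filter, Finset.mem_image]
        constructor
        · obtain ⟨x, tl, hxtl⟩ : ∃ x tl, s = x :: tl := by
            cases hs2 : s with
            | nil => rw [hs2] at hslen; simp at hslen; omega
            | cons x tl => exact ⟨x, tl, rfl⟩
          have hx : x = true := by rw [hxtl] at hhead; simpa using hhead
          have htl : tl.length = p.length - 1 := by
            rw [hxtl] at hslen; simp only [List.length_cons] at hslen; omega
          exact ⟨tl, mem_allB _ _ htl, by rw [hxtl, hx]⟩
        · rw [← hjdef]; exact hfs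
      -- support decomposition
      have hsupp : (⟨a, b, p⟩ : WalkSig G).2.2.support = L.reverse ++ v :: R := by
        show p.support = L.reverse ++ v :: R
        rw [support_eq_map p]
        rw [map_range_split p.length j hjr p.getVert]
        congr 1
        · rw [hLdef, reverse_map_range]
          apply List.map_congr_left
          intro t ht
          simp only [List.mem_range] at ht
          congr 1
          omega
        · rw [hgj]
      rw [hsupp, hT]
      rw [Finset.mem_biUnion]
      refine ⟨p.length, Finset.mem_Icc.2 ⟨by omega, hrℓ⟩, ?_⟩
      rw [Finset.mem_biUnion]
      refine ⟨s, hspat, ?_⟩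
      rw [Finset.mem_image]
      refine ⟨(L, R), ?_, rfl⟩
      rw [Finset.mem_product]
      rw [hslen, ← hjdef]
      exact ⟨hL, hR⟩
    -- a path class is recovered from the support of its canonical representative
    have hinj : Set.InjOn (fun P : UWalk G =>
        (Quotient.out (s := walkSetoid G) P).2.2.support) S := by
      intro P hP Q hQ h
      simp only at h
      have := walksig_eq_of_support_eq _ _ h
      have h2 : Quotient.out (s := walkSetoid G) P = Quotient.out (s := walkSetoid G) Q := this
      exact (Quotient.out_eq (s := walkSetoid G) P).symm.trans
        ((congrArg (Quotient.mk (walkSetoid G)) h2).trans (Quotient.out_eq (s := walkSetoid G) Q))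
    have himg : (fun P : UWalk G => (Quotient.out (s := walkSetoid G) P).2.2.support) '' S
        ⊆ ↑T := by
      rintro l ⟨P, hP, rfl⟩
      obtain ⟨hPmem, hPv⟩ := hP
      exact key _ (out_cond P hPmem) hPv
    have hfin : S.Finite := by
      apply Set.Finite.of_finite_image _ hinj
      exact (T.finite_toSet).subset himg
    have hcard : S.ncard ≤ T.card := by
      rw [← Set.ncard_image_of_injOn hinj]
      rw [← Set.ncard_coe_finset]
      exact Set.ncard_le_ncard himg (T.finite_toSet)
    -- cardinality bound for T
    have hTcard : T.card ≤ 2 ^ ℓ * d ^ ((ℓ + 1) / 2 + 1) * Δ ^ (ℓ / 2 - 1) := by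
      rw [hT]
      refine le_trans Finset.card_biUnion_le ?_
      refine le_trans (Finset.sum_le_sum (fun r hr => ?_))
        (numeric_bound (by omega : 1 ≤ d) hΔ ℓ (by omega))
      -- bound the inner biUnion for fixed r
      rw [Finset.mem_Icc] at hr
      refine le_trans Finset.card_biUnion_le ?_
      have hper : ∀ s ∈ pat r,
          (((chainF (stepL s) v (Jfun s)) ×ˢ (chainF (stepR s) v (s.length - Jfun s))).image
            (fun LR => LR.1.reverse ++ v :: LR.2)).card
          ≤ d ^ (min r ((r+1)/2+1)) * Δ ^ (r - min r ((r+1)/2+1)) := by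
        intro s hs
        rw [hpat] at hs
        simp only [Finset.mem_filter, Finset.mem_image] at hs
        obtain ⟨⟨tl, htl, hcons⟩, hfcnt⟩ := hs
        have hslen : s.length = r := by
          rw [← hcons]
          have := length_of_mem_allB _ _ htl
          simp [this]
          omega
        have hj : Jfun s ≤ s.length := Jfun_le s (by omega)
        refine le_trans Finset.card_image_le ?_
        rw [Finset.card_product]
        have hcL : (chainF (stepL s) v (Jfun s)).card
            ≤ ∏ t ∈ Finset.range (Jfun s),
                (if s.getD (Jfun s - 1 - t) false = true then d else Δ) := by
          apply chainF_card
          intro t x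
          rw [hstepL]
          simp only
          by_cases hb : s.getD (Jfun s - 1 - t) false = true
          · rw [if_pos hb, if_pos hb]; exact outF_card x
          · rw [if_neg hb, if_neg hb]; exact nbrF_card x
        have hcR : (chainF (stepR s) v (s.length - Jfun s)).card
            ≤ ∏ t ∈ Finset.range (s.length - Jfun s),
                (if s.getD (Jfun s + t) false = true then Δ else d) := by
          apply chainF_card
          intro t x
          rw [hstepR]
          simp only
          by_cases hb : s.getD (Jfun s + t) false = true
          · rw [if_pos hb, if_pos hb]; exact nbrF_card x
          · rw [if_neg hb, if_neg hb]; exact outF_card x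
        refine le_trans (Nat.mul_le_mul hcL hcR) ?_
        rw [prod_split s (Jfun s) d Δ]
        have hsw := pow_swap_le (d := d) (Δ := Δ) (g := gcnt s (Jfun s)) (by omega : 1 ≤ d) hΔ hfcnt
        refine le_trans hsw ?_
        rw [fcnt_add_gcnt s (Jfun s) hj, hslen]
      refine le_trans (Finset.sum_le_sum hper) ?_
      rw [Finset.sum_const, smul_eq_mul]
      apply Nat.mul_le_mul_right
      calc (pat r).card ≤ ((allB (r-1)).image (true :: ·)).card := by
            rw [hpat]; exact Finset.card_filter_le _ _
        _ ≤ (allB (r-1)).card := Finset.card_image_le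
        _ ≤ 2 ^ (r-1) := card_allB _
    exact ⟨hfin, le_trans hcard hTcard⟩
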